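/- Let 0 ≤ l ≤ min(m, n) with l ≤ m - 1, and let Ω_l = ∑_{i=0}^{l} c_{i,l-i} v_i ⊗ w_{l-i} with c_{i,l-i} = (-1)^i q^{i(2l-n-i-1)} ∏_{j=0}^{i} [n-l+j]_q / [m-j+1]_q. Then the coefficient of the basis vector v_{m-l} ⊗ w_n in f^{m+n-2l} Ω_l (where f acts on V_m ⊗ V_n by f(v ⊗ w) = f v ⊗ w + K^{-1} v ⊗ f w) equals q^{-l(n-l)} ∑_{i=0}^{min(l, m-l)} (-1)^i q^{-i} ([m+n-2l]_q! [m-l]_q! [n]_q! / ([m-l-i]_q! [n-l+i]_q! [i]_q! [l-i]_q!)) · ∏_{j=0}^{i} [n-l+j]_q / [m-j+1]_q. -/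

import Mathlib

open scoped BigOperators

/-- The `q`-integer `[r]_q = (q^r - q^{-r})/(q - q⁻¹)`. -/
noncomputable def qint (q : ℂ) (r : ℤ) : ℂ := (q ^ r - q ^ (-r)) / (q - q⁻¹)

/-- The `q`-factorial `[r]_q! = ∏_{s=1}^r [s]_q`. -/
noncomputable def qfact (q : ℂ) (r : ℕ) : ℂ := ∏ s ∈ Finset.range r, qint q ((s : ℤ) + 1)

/-- The `q`-binomial coefficient `[r choose s]_q`. -/
noncomputable def qbinom (q : ℂ) (r s : ℕ) : ℂ := qfact q r / (qfact q s * qfact q (r - s))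

/-- `q` is not a root of unity. -/
def NotRootOfUnity (q : ℂ) : Prop := ∀ k : ℕ, 0 < k → q ^ k ≠ 1

/-- The underlying space of `V_m ⊗ V_n` in terms of the coefficients with respect to the
basis `v_i ⊗ w_j`, `0 ≤ i ≤ m`, `0 ≤ j ≤ n`. -/
abbrev W (m n : ℕ) := Fin (m + 1) → Fin (n + 1) → ℂ

/-- Extension of a coefficient array to all of `ℕ × ℕ`, zero out of range. -/
noncomputable def uext {m n : ℕ} (u : W m n) (a b : ℕ) : ℂ :=
  if h : a ≤ m ∧ b ≤ n then u ⟨a, by omega⟩ ⟨b, by omega⟩ else 0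

/-- The basis vector `v_i ⊗ w_j` of `V_m ⊗ V_n`. -/
def basisW (m n i j : ℕ) : W m n := fun a b => if (a : ℕ) = i ∧ (b : ℕ) = j then 1 else 0

/-- Action of `e` on `V_m ⊗ V_n`: `e (v ⊗ w) = e v ⊗ K w + v ⊗ e w`, where on `V_m`
`e v_i = [m+1-i]_q v_{i-1}` and `K v_i = q^{m-2i} v_i`. -/
noncomputable def eT (q : ℂ) (m n : ℕ) (u : W m n) : W m n := fun a b =>
  qint q ((m : ℤ) - ((a : ℕ) : ℤ)) * q ^ ((n : ℤ) - 2 * ((b : ℕ) : ℤ)) *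
      uext u ((a : ℕ) + 1) (b : ℕ)
    + qint q ((n : ℤ) - ((b : ℕ) : ℤ)) * uext u (a : ℕ) ((b : ℕ) + 1)

/-- Action of `f` on `V_m ⊗ V_n`: `f (v ⊗ w) = f v ⊗ w + K⁻¹ v ⊗ f w`, where on `V_m`
`f v_i = [i+1]_q v_{i+1}` and `K⁻¹ v_i = q^{-(m-2i)} v_i`. -/
noncomputable def fT (q : ℂ) (m n : ℕ) (u : W m n) : W m n := fun a b =>
  qint q ((a : ℕ) : ℤ) * uext u ((a : ℕ) - 1) (b : ℕ)
    + q ^ (-((m : ℤ) - 2 * ((a : ℕ) : ℤ))) * qint q ((b : ℕ) : ℤ) *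
        uext u (a : ℕ) ((b : ℕ) - 1)

/-- Action of `K` on `V_m ⊗ V_n`: `K (v ⊗ w) = K v ⊗ K w`. -/
noncomputable def KT (q : ℂ) (m n : ℕ) (u : W m n) : W m n := fun a b =>
  q ^ ((m : ℤ) - 2 * ((a : ℕ) : ℤ)) * q ^ ((n : ℤ) - 2 * ((b : ℕ) : ℤ)) * u a b

/-- Action of `e₀` on the evaluation module `V_m(x) ⊗ V_n(y)`:
`e₀ (v ⊗ w) = q⁻¹ x (f v) ⊗ (K⁻¹ w) + q⁻¹ y v ⊗ (f w)`. -/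
noncomputable def e0T (q x y : ℂ) (m n : ℕ) (u : W m n) : W m n := fun a b =>
  q⁻¹ * x * qint q ((a : ℕ) : ℤ) * q ^ (-((n : ℤ) - 2 * ((b : ℕ) : ℤ))) *
      uext u ((a : ℕ) - 1) (b : ℕ)
    + q⁻¹ * y * qint q ((b : ℕ) : ℤ) * uext u (a : ℕ) ((b : ℕ) - 1)

/-- Action of `f₀` on the evaluation module `V_m(x) ⊗ V_n(y)`:
`f₀ (v ⊗ w) = q x⁻¹ (e v) ⊗ w + q y⁻¹ (K v) ⊗ (e w)`. -/
noncomputable def f0T (q x y : ℂ) (m n : ℕ) (u : W m n) : W m n := fun a b =>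
  q * x⁻¹ * qint q ((m : ℤ) - ((a : ℕ) : ℤ)) * uext u ((a : ℕ) + 1) (b : ℕ)
    + q * y⁻¹ * q ^ ((m : ℤ) - 2 * ((a : ℕ) : ℤ)) * qint q ((n : ℤ) - ((b : ℕ) : ℤ)) *
        uext u (a : ℕ) ((b : ℕ) + 1)

/-- The coefficient `c_{i,l-i} = (-1)^i q^{i(2l-n-i-1)} ∏_{j=0}^i [n-l+j]_q/[m-j+1]_q`. -/
noncomputable def cOmega (q : ℂ) (m n l i : ℕ) : ℂ :=
  (-1 : ℂ) ^ i * q ^ ((i : ℤ) * (2 * (l : ℤ) - (n : ℤ) - (i : ℤ) - 1)) *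
    ∏ j ∈ Finset.range (i + 1),
      qint q ((n : ℤ) - (l : ℤ) + (j : ℤ)) / qint q ((m : ℤ) - (j : ℤ) + 1)

/-- The highest weight vector `Ω_l = ∑_{i=0}^l c_{i,l-i} v_i ⊗ w_{l-i}`. -/
noncomputable def Omega (q : ℂ) (m n l : ℕ) : W m n :=
  ∑ i ∈ Finset.range (l + 1), cOmega q m n l i • basisW m n i (l - i)

/-- The coefficient `d_{i,l} = (-1)^i q^{i(-m+2l-i-1)} ∏_{j=0}^i [m-l+j]_q/[n-j+1]_q`. -/
noncomputable def dPhi (q : ℂ) (m n l i : ℕ) : ℂ :=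
  (-1 : ℂ) ^ i * q ^ ((i : ℤ) * (-(m : ℤ) + 2 * (l : ℤ) - (i : ℤ) - 1)) *
    ∏ j ∈ Finset.range (i + 1),
      qint q ((m : ℤ) - (l : ℤ) + (j : ℤ)) / qint q ((n : ℤ) - (j : ℤ) + 1)

/-- The lowest weight vector `Φ_l = ∑_{i=0}^l d_{i,l} v_{m-l+i} ⊗ w_{n-i}`. -/
noncomputable def Phi (q : ℂ) (m n l : ℕ) : W m n :=
  ∑ i ∈ Finset.range (l + 1), dPhi q m n l i • basisW m n (m - l + i) (n - i)


section Aux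

variable {q : ℂ}

lemma qden_ne (hq : q ≠ 0) (hq' : NotRootOfUnity q) : q - q⁻¹ ≠ 0 := by
  intro h
  have h1 : q = q⁻¹ := by linear_combination h
  have h2 : q ^ 2 = 1 := by
    have := mul_inv_cancel₀ hq
    calc q ^ 2 = q * q := sq q
    _ = q * q⁻¹ := by rw [← h1]
    _ = 1 := mul_inv_cancel₀ hq
  exact hq' 2 (by norm_num) h2

lemma qint_zero : qint q 0 = 0 := by simp [qint]

lemma qint_nat_ne_zero (hq : q ≠ 0) (hq' : NotRootOfUnity q) (s : ℕ) (hs : 0 < s) :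
    qint q (s : ℤ) ≠ 0 := by
  unfold qint
  rw [div_ne_zero_iff]
  refine ⟨fun h => ?_, qden_ne hq hq'⟩
  have h1 : q ^ (s : ℤ) = q ^ (-(s : ℤ)) := sub_eq_zero.mp h
  have h2 : q ^ (2 * s) = 1 := by
    have h3 : q ^ ((s : ℤ) + (- s : ℤ)) = q ^ (s:ℤ) * q ^ (-(s:ℤ)) := zpow_add₀ hq _ _
    rw [← h1] at h3
    have h4 : q ^ ((s:ℤ) + (-s:ℤ)) = 1 := by rw [add_neg_cancel, zpow_zero]
    have h5 : q ^ (s:ℤ) * q ^ (s:ℤ) = 1 := by rw [← h3, h4]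
    calc q ^ (2 * s) = q ^ (s:ℤ) * q ^ (s:ℤ) := by
          rw [← zpow_natCast q (2*s), ← zpow_add₀ hq]; congr 1; push_cast; ring
    _ = 1 := h5
  exact hq' (2 * s) (by omega) h2

lemma qfact_succ (r : ℕ) : qfact q (r + 1) = qfact q r * qint q ((r : ℤ) + 1) := by
  unfold qfact
  rw [Finset.prod_range_succ]

lemma qfact_ne_zero (hq : q ≠ 0) (hq' : NotRootOfUnity q) (r : ℕ) : qfact q r ≠ 0 := by
  unfold qfact
  refine Finset.prod_ne_zero_iff.mpr fun s _ => ?_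
  have : ((s : ℤ) + 1) = ((s + 1 : ℕ) : ℤ) := by push_cast; ring
  rw [this]
  exact qint_nat_ne_zero hq hq' (s+1) (by omega)

lemma qint_add (hq : q ≠ 0) (x y : ℤ) :
    qint q (x + y) = q ^ x * qint q y + q ^ (-y) * qint q x := by
  unfold qint
  rw [mul_div_assoc', mul_div_assoc', ← add_div]
  congr 1
  rw [neg_add, zpow_add₀ hq, zpow_add₀ hq]
  ring

end Aux

lemma qbinom_pascal (hq : q ≠ 0) (hq' : NotRootOfUnity q) (s t : ℕ) :
    qbinom q (s+1+(t+1)) (s+1)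
      = q ^ (-((t+1 : ℕ) : ℤ)) * qbinom q (s+t+1) s
        + q ^ (((s+1 : ℕ) : ℤ)) * qbinom q (s+t+1) (s+1) := by
  have hFs := qfact_ne_zero (q := q) hq hq' s
  have hFt := qfact_ne_zero (q := q) hq hq' t
  have hIs : qint q ((s:ℤ)+1) ≠ 0 := by
    rw [show ((s:ℤ)+1) = ((s+1:ℕ):ℤ) by push_cast; ring]
    exact qint_nat_ne_zero hq hq' _ (by omega)
  have hIt : qint q ((t:ℤ)+1) ≠ 0 := by
    rw [show ((t:ℤ)+1) = ((t+1:ℕ):ℤ) by push_cast; ring]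
    exact qint_nat_ne_zero hq hq' _ (by omega)
  have key : qint q (((s+t+1 : ℕ):ℤ) + 1)
      = q ^ (((s+1:ℕ)):ℤ) * qint q ((t:ℤ)+1) + q ^ (-((t+1:ℕ):ℤ)) * qint q ((s:ℤ)+1) := by
    have h := qint_add hq ((s:ℤ)+1) ((t:ℤ)+1)
    rw [show (((s+t+1 : ℕ):ℤ) + 1) = ((s:ℤ)+1) + ((t:ℤ)+1) by push_cast; ring,
      show (((s+1:ℕ)):ℤ) = (s:ℤ)+1 by push_cast; ring,
      show (-((t+1:ℕ):ℤ)) = -((t:ℤ)+1) by push_cast; ring]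
    exact h
  unfold qbinom
  rw [show s+1+(t+1) - (s+1) = t+1 by omega, show s+t+1 - s = t+1 by omega,
    show s+t+1-(s+1) = t by omega, show s+1+(t+1) = (s+t+1)+1 by omega,
    qfact_succ (s+t+1), qfact_succ s, qfact_succ t, key]
  field_simp
  ring

noncomputable def Cf (q : ℂ) (m i j a b : ℕ) : ℂ :=
  qbinom q ((a - i) + (b - j)) (a - i) *
    q ^ ((((a:ℤ) - (i:ℤ)) * ((b:ℤ) - (j:ℤ))) - ((b:ℤ) - (j:ℤ)) * ((m:ℤ) - 2*(i:ℤ))) *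
    (qfact q a / qfact q i) * (qfact q b / qfact q j)

lemma Cf_eq (q : ℂ) (m i j s t : ℕ) :
    Cf q m i j (i+s) (j+t)
      = qbinom q (s+t) s * q ^ (((s:ℤ)) * ((t:ℤ)) - ((t:ℤ)) * ((m:ℤ) - 2*(i:ℤ))) *
          (qfact q (i+s) / qfact q i) * (qfact q (j+t) / qfact q j) := by
  unfold Cf
  rw [show i+s-i = s by omega, show j+t-j = t by omega,
    show (((i+s:ℕ):ℤ) - (i:ℤ)) = (s:ℤ) by push_cast; ring,
    show (((j+t:ℕ):ℤ) - (j:ℤ)) = (t:ℤ) by push_cast; ring]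

lemma Cf_self (q : ℂ) (hq : q ≠ 0) (hq' : NotRootOfUnity q) (m i j : ℕ) :
    Cf q m i j i j = 1 := by
  have h := Cf_eq q m i j 0 0
  simp only [Nat.add_zero] at h
  rw [h]
  have h0 : qfact q 0 = 1 := by simp [qfact]
  have hb : qbinom q 0 0 = 1 := by unfold qbinom; rw [h0]; norm_num
  rw [hb]
  push_cast
  rw [div_self (qfact_ne_zero hq hq' i), div_self (qfact_ne_zero hq hq' j)]
  norm_num

lemma qbinom_left_zero (q : ℂ) (hq : q ≠ 0) (hq' : NotRootOfUnity q) (r : ℕ) :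
    qbinom q r 0 = 1 := by
  unfold qbinom
  rw [show r - 0 = r by omega, show qfact q 0 = 1 by simp [qfact], one_mul,
    div_self (qfact_ne_zero hq hq' r)]

lemma qbinom_self (q : ℂ) (hq : q ≠ 0) (hq' : NotRootOfUnity q) (r : ℕ) :
    qbinom q r r = 1 := by
  unfold qbinom
  rw [show r - r = 0 by omega, show qfact q 0 = 1 by simp [qfact], mul_one,
    div_self (qfact_ne_zero hq hq' r)]

variable {q : ℂ}

lemma step_t0 (hq : q ≠ 0) (hq' : NotRootOfUnity q) (m i j s : ℕ) :
    qint q ((i+s+1 : ℕ) : ℤ) * Cf q m i j (i+s) j = Cf q m i j (i+s+1) j := by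
  have h1 := Cf_eq q m i j s 0
  have h2 := Cf_eq q m i j (s+1) 0
  simp only [Nat.add_zero] at h1 h2
  rw [show i+(s+1) = i+s+1 from rfl] at h2
  rw [h1, h2, qbinom_self q hq hq', qbinom_self q hq hq',
    qfact_succ (i+s),
    show ((i+s+1:ℕ):ℤ) = ((i+s:ℕ):ℤ) + 1 by push_cast; ring]
  have hE : (((s:ℕ):ℤ)) * (((0:ℕ):ℤ)) - (((0:ℕ):ℤ)) * ((m:ℤ) - 2*(i:ℤ))
      = (((s+1:ℕ):ℤ)) * (((0:ℕ):ℤ)) - (((0:ℕ):ℤ)) * ((m:ℤ) - 2*(i:ℤ)) := by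
    push_cast; ring
  rw [hE]
  ring

lemma step_s0 (hq : q ≠ 0) (hq' : NotRootOfUnity q) (m i j t : ℕ) :
    q ^ (-((m:ℤ) - 2*((i:ℕ):ℤ))) * qint q ((j+t+1 : ℕ) : ℤ) * Cf q m i j i (j+t)
      = Cf q m i j i (j+t+1) := by
  have h1 := Cf_eq q m i j 0 t
  have h2 := Cf_eq q m i j 0 (t+1)
  simp only [Nat.add_zero] at h1 h2
  rw [show j+(t+1) = j+t+1 from rfl] at h2
  rw [h1, h2, qbinom_left_zero q hq hq', qbinom_left_zero q hq hq',
    qfact_succ (j+t),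
    show ((j+t+1:ℕ):ℤ) = ((j+t:ℕ):ℤ) + 1 by push_cast; ring]
  have hE : q ^ (-((m:ℤ) - 2*((i:ℕ):ℤ)))
        * q ^ ((((0:ℕ):ℤ)) * (((t:ℕ):ℤ)) - (((t:ℕ):ℤ)) * ((m:ℤ) - 2*(i:ℤ)))
      = q ^ ((((0:ℕ):ℤ)) * (((t+1:ℕ):ℤ)) - (((t+1:ℕ):ℤ)) * ((m:ℤ) - 2*(i:ℤ))) := by
    rw [← zpow_add₀ hq]; congr 1; push_cast; ring
  rw [← hE]
  ring

lemma step_main (hq : q ≠ 0) (hq' : NotRootOfUnity q) (m i j s t : ℕ) :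
    qint q ((i+s+1 : ℕ) : ℤ) * Cf q m i j (i+s) (j+t+1)
      + q ^ (-((m:ℤ) - 2*((i+s+1:ℕ):ℤ))) * qint q ((j+t+1 : ℕ) : ℤ) * Cf q m i j (i+s+1) (j+t)
    = Cf q m i j (i+s+1) (j+t+1) := by
  have h1 := Cf_eq q m i j s (t+1)
  have h2 := Cf_eq q m i j (s+1) t
  have h3 := Cf_eq q m i j (s+1) (t+1)
  rw [show j+(t+1) = j+t+1 from rfl] at h1 h3
  rw [show i+(s+1) = i+s+1 from rfl] at h2 h3
  rw [h1, h2, h3, qbinom_pascal hq hq' s t,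
    show s+(t+1) = s+t+1 by omega, show (s+1)+t = s+t+1 by omega,
    qfact_succ (i+s), qfact_succ (j+t),
    show ((i+s+1:ℕ):ℤ) = ((i+s:ℕ):ℤ) + 1 by push_cast; ring,
    show ((j+t+1:ℕ):ℤ) = ((j+t:ℕ):ℤ) + 1 by push_cast; ring]
  have hE1 : (((s:ℕ):ℤ)) * (((t+1:ℕ):ℤ)) - (((t+1:ℕ):ℤ)) * ((m:ℤ) - 2*(i:ℤ))
      = ((((s+1:ℕ)):ℤ)) * (((t+1:ℕ):ℤ)) - (((t+1:ℕ):ℤ)) * ((m:ℤ) - 2*(i:ℤ)) + (-((t+1:ℕ):ℤ)) := by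
    push_cast; ring
  have hE2 : q ^ (-((m:ℤ) - 2*(((i+s:ℕ):ℤ)+1)))
        * q ^ ((((s+1:ℕ)):ℤ) * (((t:ℕ)):ℤ) - (((t:ℕ)):ℤ) * ((m:ℤ) - 2*(i:ℤ)))
      = q ^ (((((s+1:ℕ)):ℤ)) * (((t+1:ℕ):ℤ)) - (((t+1:ℕ):ℤ)) * ((m:ℤ) - 2*(i:ℤ)))
        * q ^ ((((s+1:ℕ)):ℤ)) := by
    rw [← zpow_add₀ hq, ← zpow_add₀ hq]; congr 1; push_cast; ring
  rw [hE1, zpow_add₀ hq]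
  rw [show q ^ (-((m:ℤ) - 2*(((i+s:ℕ):ℤ)+1))) * qint q (((j+t:ℕ):ℤ)+1)
        * (qbinom q (s+t+1) (s+1) * q ^ ((((s+1:ℕ)):ℤ) * (((t:ℕ)):ℤ) - (((t:ℕ)):ℤ) * ((m:ℤ) - 2*(i:ℤ)))
          * (qfact q (i+s) * qint q (((i+s:ℕ):ℤ)+1) / qfact q i) * (qfact q (j+t) / qfact q j))
      = qint q (((j+t:ℕ):ℤ)+1)
        * (qbinom q (s+t+1) (s+1) * (q ^ (((((s+1:ℕ)):ℤ)) * (((t+1:ℕ):ℤ)) - (((t+1:ℕ):ℤ)) * ((m:ℤ) - 2*(i:ℤ))) * q ^ ((((s+1:ℕ)):ℤ)))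
          * (qfact q (i+s) * qint q (((i+s:ℕ):ℤ)+1) / qfact q i) * (qfact q (j+t) / qfact q j)) from by
    rw [← hE2]; ring]
  ring

lemma uext_le {m n : ℕ} (u : W m n) (a b : ℕ) (ha : a ≤ m) (hb : b ≤ n) :
    uext u a b = u ⟨a, by omega⟩ ⟨b, by omega⟩ := dif_pos ⟨ha, hb⟩

lemma fT_pow_basis (hq : q ≠ 0) (hq' : NotRootOfUnity q) (m n : ℕ) (N : ℕ) :
    ∀ (i j : ℕ) (a : Fin (m+1)) (b : Fin (n+1)),
    (fT q m n)^[N] (basisW m n i j) a b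
      = if i ≤ (a:ℕ) ∧ j ≤ (b:ℕ) ∧ ((a:ℕ) - i) + ((b:ℕ) - j) = N
        then Cf q m i j (a:ℕ) (b:ℕ) else 0 := by
  induction N with
  | zero =>
    intro i j a b
    simp only [Function.iterate_zero, id, basisW]
    by_cases h : (a:ℕ) = i ∧ (b:ℕ) = j
    · rw [if_pos h, if_pos (by omega), h.1, h.2, Cf_self q hq hq']
    · rw [if_neg h, if_neg (by omega)]
  | succ N ih =>
    intro i j a b
    obtain ⟨A, hA⟩ := a
    obtain ⟨B, hB⟩ := b
    rw [Function.iterate_succ_apply']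
    show qint q ((A:ℕ):ℤ) * uext _ (A - 1) B
        + q ^ (-((m : ℤ) - 2 * ((A:ℕ) : ℤ))) * qint q ((B:ℕ):ℤ) * uext _ A (B - 1) = _
    rw [uext_le _ (A-1) B (by omega) (by omega), uext_le _ A (B-1) (by omega) (by omega),
      ih i j ⟨A-1, by omega⟩ ⟨B, by omega⟩, ih i j ⟨A, by omega⟩ ⟨B-1, by omega⟩]
    simp only [Fin.val_mk] at *
    by_cases hc : i ≤ A ∧ j ≤ B ∧ (A - i) + (B - j) = N + 1
    · rw [if_pos hc]
      obtain ⟨hc1, hc2, hc3⟩ := hc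
      by_cases hs : i < A
      · by_cases ht : j < B
        · -- both strictly bigger
          obtain ⟨s, rfl⟩ : ∃ s, A = i + s + 1 := ⟨A - i - 1, by omega⟩
          obtain ⟨t, rfl⟩ : ∃ t, B = j + t + 1 := ⟨B - j - 1, by omega⟩
          rw [if_pos (by omega), if_pos (by omega),
            show i+s+1-1 = i+s from rfl, show j+t+1-1 = j+t from rfl]
          exact step_main hq hq' m i j s t
        · -- t = 0 : B = j
          have hBj : B = j := by omega
          subst hBj
          obtain ⟨s, rfl⟩ : ∃ s, A = i + s + 1 := ⟨A - i - 1, by omega⟩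
          rw [if_pos (by omega), if_neg (by omega),
            show i+s+1-1 = i+s from rfl, mul_zero, add_zero]
          exact step_t0 hq hq' m _ _ _
      · -- s = 0 : A = i
        have hAi : A = i := by omega
        subst hAi
        obtain ⟨t, rfl⟩ : ∃ t, B = j + t + 1 := ⟨B - j - 1, by omega⟩
        rw [if_neg (by omega), if_pos (by omega),
          show j+t+1-1 = j+t from rfl, mul_zero, zero_add]
        exact step_s0 hq hq' m _ _ _
    · rw [if_neg hc]
      have e1 : qint q ((A:ℕ):ℤ) * (if i ≤ A-1 ∧ j ≤ B ∧ (A-1-i) + (B-j) = N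
            then Cf q m i j (A-1) B else 0) = 0 := by
        rcases Nat.eq_zero_or_pos A with h0 | h0
        · subst h0; simp [qint_zero]
        · rw [if_neg (by omega), mul_zero]
      have e2 : q ^ (-((m : ℤ) - 2 * ((A:ℕ) : ℤ))) * qint q ((B:ℕ):ℤ)
          * (if i ≤ A ∧ j ≤ B-1 ∧ (A-i) + (B-1-j) = N
            then Cf q m i j A (B-1) else 0) = 0 := by
        rcases Nat.eq_zero_or_pos B with h0 | h0
        · subst h0; simp [qint_zero]
        · rw [if_neg (by omega), mul_zero]
      rw [e1, e2, add_zero]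

lemma uext_add {m n : ℕ} (u v : W m n) (a b : ℕ) :
    uext (u + v) a b = uext u a b + uext v a b := by
  unfold uext; split <;> simp

lemma uext_smul {m n : ℕ} (c : ℂ) (u : W m n) (a b : ℕ) :
    uext (c • u) a b = c * uext u a b := by
  unfold uext; split <;> simp

lemma fT_add (m n : ℕ) (u v : W m n) : fT q m n (u + v) = fT q m n u + fT q m n v := by
  funext a b
  simp only [fT, uext_add, Pi.add_apply]
  ring

lemma fT_smul (m n : ℕ) (c : ℂ) (u : W m n) : fT q m n (c • u) = c • fT q m n u := by
  funext a b
  simp only [fT, uext_smul, Pi.smul_apply, smul_eq_mul]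
  ring

lemma fT_sum {ι : Type*} (m n : ℕ) (S : Finset ι) (g : ι → W m n) :
    fT q m n (∑ i ∈ S, g i) = ∑ i ∈ S, fT q m n (g i) := by
  classical
  induction S using Finset.induction_on with
  | empty =>
    funext a b
    simp [fT, uext, Pi.zero_apply]
  | insert _ _ hnew ih =>
    rw [Finset.sum_insert hnew, Finset.sum_insert hnew, fT_add, ih]

lemma fT_iterate_sum_smul {ι : Type*} (m n : ℕ) (N : ℕ) (S : Finset ι)
    (c : ι → ℂ) (g : ι → W m n) :
    (fT q m n)^[N] (∑ i ∈ S, c i • g i) = ∑ i ∈ S, c i • (fT q m n)^[N] (g i) := by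
  induction N with
  | zero => simp
  | succ N ih =>
    rw [Function.iterate_succ_apply', ih, fT_sum]
    refine Finset.sum_congr rfl fun i _ => ?_
    rw [fT_smul, Function.iterate_succ_apply']

lemma term_eq (hq : q ≠ 0) (hq' : NotRootOfUnity q) (m n l i : ℕ)
    (hln : l ≤ n) (hlm : l + 1 ≤ m) (hil : i ≤ l) (himl : i ≤ m - l) :
    cOmega q m n l i * Cf q m i (l-i) (m-l) n
      = q ^ (-(l : ℤ) * ((n : ℤ) - (l : ℤ))) *
          ((-1 : ℂ) ^ i * q ^ (-(i : ℤ)) *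
            (qfact q (m + n - 2 * l) * qfact q (m - l) * qfact q n /
              (qfact q (m - l - i) * qfact q (n - l + i) * qfact q i * qfact q (l - i))) *
            ∏ j ∈ Finset.range (i + 1),
              qint q ((n : ℤ) - (l : ℤ) + (j : ℤ)) / qint q ((m : ℤ) - (j : ℤ) + 1)) := by
  unfold cOmega Cf qbinom
  rw [show (m-l-i) + (n-(l-i)) = m+n-2*l by omega,
    show m+n-2*l - (m-l-i) = n-l+i by omega]
  have hc1 : ((m-l:ℕ):ℤ) = (m:ℤ) - (l:ℤ) := by omega
  have hc2 : ((l-i:ℕ):ℤ) = (l:ℤ) - (i:ℤ) := by omega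
  have hpow : q ^ ((i:ℤ) * (2 * (l:ℤ) - (n:ℤ) - (i:ℤ) - 1))
        * q ^ ((((m-l:ℕ):ℤ) - (i:ℤ)) * ((n:ℤ) - ((l-i:ℕ):ℤ))
            - ((n:ℤ) - ((l-i:ℕ):ℤ)) * ((m:ℤ) - 2*(i:ℤ)))
      = q ^ (-(l : ℤ) * ((n : ℤ) - (l : ℤ))) * q ^ (-(i : ℤ)) := by
    rw [← zpow_add₀ hq, ← zpow_add₀ hq]
    congr 1
    rw [hc1, hc2]; ring
  linear_combination ((-1:ℂ)^i *
    (∏ j ∈ Finset.range (i + 1),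
      qint q ((n : ℤ) - (l : ℤ) + (j : ℤ)) / qint q ((m : ℤ) - (j : ℤ) + 1)) *
    (qfact q (m + n - 2 * l) * qfact q (m - l) * qfact q n /
      (qfact q (m - l - i) * qfact q (n - l + i) * qfact q i * qfact q (l - i)))) * hpow

theorem coeff_f_pow_Omega (q : ℂ) (hq : q ≠ 0) (hq' : NotRootOfUnity q)
    (m n l : ℕ) (hl : l ≤ min m n) (hlm : l + 1 ≤ m) :
    (fT q m n)^[m + n - 2 * l] (Omega q m n l) ⟨m - l, by omega⟩ ⟨n, by omega⟩
      = q ^ (-(l : ℤ) * ((n : ℤ) - (l : ℤ))) *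
          ∑ i ∈ Finset.range (min l (m - l) + 1),
            (-1 : ℂ) ^ i * q ^ (-(i : ℤ)) *
              (qfact q (m + n - 2 * l) * qfact q (m - l) * qfact q n /
                (qfact q (m - l - i) * qfact q (n - l + i) * qfact q i * qfact q (l - i))) *
              ∏ j ∈ Finset.range (i + 1),
                qint q ((n : ℤ) - (l : ℤ) + (j : ℤ)) / qint q ((m : ℤ) - (j : ℤ) + 1) := by
  have hln : l ≤ n := by omega
  rw [show Omega q m n l
      = ∑ i ∈ Finset.range (l+1), cOmega q m n l i • (fun i => basisW m n i (l-i)) i from rfl,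
    fT_iterate_sum_smul m n (m+n-2*l) (Finset.range (l+1)) (cOmega q m n l)
      (fun i => basisW m n i (l-i))]
  simp only [Finset.sum_apply, Pi.smul_apply, smul_eq_mul]
  have hval : ∀ i ∈ Finset.range (l+1),
      cOmega q m n l i *
        (fT q m n)^[m + n - 2*l] (basisW m n i (l-i)) ⟨m - l, by omega⟩ ⟨n, by omega⟩
      = cOmega q m n l i *
          (if i ≤ m - l ∧ l - i ≤ n ∧ ((m-l) - i) + (n - (l-i)) = m + n - 2*l
            then Cf q m i (l-i) (m-l) n else 0) := by
    intro i _
    rw [fT_pow_basis hq hq' m n (m+n-2*l) i (l-i) ⟨m-l, by omega⟩ ⟨n, by omega⟩]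
  rw [Finset.sum_congr rfl hval, Finset.mul_sum]
  have hsub : Finset.range (min l (m-l) + 1) ⊆ Finset.range (l+1) := by
    apply Finset.range_subset_range.mpr; omega
  have hz : ∀ i ∈ Finset.range (l+1), i ∉ Finset.range (min l (m-l) + 1) →
      cOmega q m n l i *
        (if i ≤ m - l ∧ l - i ≤ n ∧ ((m-l) - i) + (n - (l-i)) = m + n - 2*l
          then Cf q m i (l-i) (m-l) n else 0) = 0 := by
    intro i hi hni
    simp only [Finset.mem_range] at hi hni
    rw [if_neg (by omega), mul_zero]
  rw [← Finset.sum_subset hsub hz]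
  refine Finset.sum_congr rfl fun i hi => ?_
  simp only [Finset.mem_range] at hi
  rw [if_pos (by omega)]
  exact term_eq hq hq' m n l i hln hlm (by omega) (by omega)
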